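/- For H ∈ (0,1) and x ∈ 𝔛^H with Faber–Schauder coefficients θ_{m,ℓ}, there exist y ∈ 𝔛^H and a linear function f such that x(t) = f(2t) + 2^{−H} y(2t) for all t ∈ [0, 1/2]. Specifically, f(u) = (θ_{0,0}/2) u and y = Σ_{m=0}^∞ 2^{m(1/2−H)} Σ_{ℓ=0}^{2^m−1} θ_{m+1,ℓ} e_{m,ℓ}. -/

import Mathlib

open Filter Finset Set MeasureTheory ProbabilityTheory

noncomputable def e00 (t : ℝ) : ℝ := max (min t (1 - t)) 0

noncomputable def fs (m : ℕ) (k : ℤ) (t : ℝ) : ℝ :=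
  (2 : ℝ) ^ (-(m : ℝ) / 2) * e00 ((2 : ℝ) ^ m * t - (k : ℝ))

def IsSign (θ : ℕ → ℕ → ℝ) : Prop := ∀ m k, θ m k = 1 ∨ θ m k = -1

noncomputable def tlTerm (H : ℝ) (θ : ℕ → ℕ → ℝ) (m : ℕ) (t : ℝ) : ℝ :=
  (2 : ℝ) ^ ((m : ℝ) * (1 / 2 - H)) *
    ∑ k ∈ Finset.range (2 ^ m), θ m k * fs m (k : ℤ) t

noncomputable def sPartial (H : ℝ) (θ : ℕ → ℕ → ℝ) (n : ℕ) (t : ℝ) : ℝ :=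
  ∑ m ∈ Finset.range n, tlTerm H θ m t

def MemX (H : ℝ) (x : ℝ → ℝ) : Prop :=
  ∃ θ : ℕ → ℕ → ℝ, IsSign θ ∧ ∀ t : ℝ, x t = ∑' m : ℕ, tlTerm H θ m t

noncomputable def xTL (H : ℝ) (t : ℝ) : ℝ := ∑' m : ℕ, tlTerm H (fun _ _ => 1) m t

noncomputable def dyadicSum (p : ℝ) (x : ℝ → ℝ) (n : ℕ) (t : ℝ) : ℝ :=
  ∑ k ∈ Finset.range (2 ^ n),
    if (k : ℝ) / 2 ^ n ≤ t then |x (((k : ℝ) + 1) / 2 ^ n) - x ((k : ℝ) / 2 ^ n)| ^ p else 0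

noncomputable def nuFloor (h : ℝ) : ℤ := ⌊-(Real.logb 2 h)⌋

noncomputable def omegaH (H h : ℝ) : ℝ :=
  h * (2 : ℝ) ^ (((nuFloor h : ℝ) - 1) * (1 - H)) / ((2 : ℝ) ^ (1 - H) - 1) +
    (2 : ℝ) ^ ((1 - (nuFloor h : ℝ)) * H) / (3 * (1 - (2 : ℝ) ^ (-H)))

lemma e00_nonneg (t : ℝ) : 0 ≤ e00 t := le_max_right _ _

lemma e00_le_half (t : ℝ) : e00 t ≤ 1/2 := by
  unfold e00
  rcases le_total t (1/2) with h | h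
  · exact max_le (le_trans (min_le_left _ _) h) (by norm_num)
  · exact max_le (le_trans (min_le_right _ _) (by linarith)) (by norm_num)

lemma e00_nonpos {s : ℝ} (h : s ≤ 0) : e00 s = 0 := by
  unfold e00
  rw [max_eq_right (le_trans (min_le_left _ _) h)]

lemma e00_pos_of_ne {s : ℝ} (h : e00 s ≠ 0) : 0 < s ∧ s < 1 := by
  unfold e00 at h
  by_contra hc
  push_neg at hc
  apply h
  rcases le_or_gt s 0 with h1 | h1
  · exact max_eq_right (le_trans (min_le_left _ _) h1)
  · exact max_eq_right (le_trans (min_le_right _ _) (by linarith [hc h1]))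

lemma e00_eq_self {t : ℝ} (h0 : 0 ≤ t) (h1 : t ≤ 1/2) : e00 t = t := by
  unfold e00
  rw [min_eq_left (by linarith), max_eq_left h0]

lemma fs_abs_le (m : ℕ) (k : ℤ) (t : ℝ) : |fs m k t| ≤ (2:ℝ)^(-(m:ℝ)/2) * (1/2) := by
  unfold fs
  rw [abs_mul, abs_of_nonneg (e00_nonneg _), abs_of_nonneg (Real.rpow_nonneg (by norm_num) _)]
  exact mul_le_mul_of_nonneg_left (e00_le_half _) (Real.rpow_nonneg (by norm_num) _)

lemma fs_unique {m : ℕ} {k k' : ℕ} {t : ℝ} (h : fs m (k:ℤ) t ≠ 0) (h' : fs m (k':ℤ) t ≠ 0) :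
    k = k' := by
  unfold fs at h h'
  have h1 := e00_pos_of_ne (fun hz => h (by rw [hz, mul_zero]))
  have h2 := e00_pos_of_ne (fun hz => h' (by rw [hz, mul_zero]))
  push_cast at h1 h2
  have hk1 : ((k:ℝ)) < (k':ℝ) + 1 := by linarith [h1.1, h2.2]
  have hk2 : ((k':ℝ)) < (k:ℝ) + 1 := by linarith [h2.1, h1.2]
  have : k < k' + 1 := by exact_mod_cast hk1
  have : k' < k + 1 := by exact_mod_cast hk2
  omega

lemma inner_bound (θ : ℕ → ℝ) (hθ : ∀ k, θ k = 1 ∨ θ k = -1) (m N : ℕ) (t : ℝ) :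
    |∑ k ∈ Finset.range N, θ k * fs m (k:ℤ) t| ≤ (2:ℝ)^(-(m:ℝ)/2) * (1/2) := by
  have hnn : (0:ℝ) ≤ (2:ℝ)^(-(m:ℝ)/2) * (1/2) := by positivity
  by_cases hz : ∀ k ∈ Finset.range N, fs m (k:ℤ) t = 0
  · rw [Finset.sum_eq_zero (fun k hk => by rw [hz k hk, mul_zero]), abs_zero]
    exact hnn
  · push_neg at hz
    obtain ⟨k₀, hk₀, hne⟩ := hz
    rw [Finset.sum_eq_single k₀ (fun b _ hb => by
        by_cases hb' : fs m (b:ℤ) t = 0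
        · rw [hb', mul_zero]
        · exact absurd (fs_unique hb' hne) hb)
      (fun h => absurd hk₀ h)]
    rw [abs_mul]
    have hone : |θ k₀| = 1 := by rcases hθ k₀ with h|h <;> simp [h]
    rw [hone, one_mul]
    exact fs_abs_le _ _ _

lemma tl_abs_le (H : ℝ) (θ : ℕ → ℕ → ℝ) (hθ : IsSign θ) (m : ℕ) (t : ℝ) :
    |tlTerm H θ m t| ≤ ((2:ℝ)^(-H))^m * (1/2) := by
  unfold tlTerm
  rw [abs_mul, abs_of_nonneg (Real.rpow_nonneg (by norm_num) _)]
  have key : (2:ℝ)^((m:ℝ)*(1/2-H)) * ((2:ℝ)^(-(m:ℝ)/2) * (1/2)) = ((2:ℝ)^(-H))^m * (1/2) := by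
    rw [← Real.rpow_natCast ((2:ℝ)^(-H)) m, ← Real.rpow_mul (by norm_num : (0:ℝ) ≤ 2),
      ← mul_assoc, ← Real.rpow_add (by norm_num : (0:ℝ) < 2)]
    congr 2
    ring
  rw [← key]
  exact mul_le_mul_of_nonneg_left (inner_bound (θ m) (hθ m) m _ t)
    (Real.rpow_nonneg (by norm_num) _)

lemma tl_summable (H : ℝ) (hH0 : 0 < H) (θ : ℕ → ℕ → ℝ) (hθ : IsSign θ) (t : ℝ) :
    Summable (fun m => tlTerm H θ m t) := by
  have hg : Summable (fun m : ℕ => ((2:ℝ)^(-H))^m * (1/2)) := by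
    apply Summable.mul_right
    exact summable_geometric_of_lt_one (Real.rpow_nonneg (by norm_num) _)
      (Real.rpow_lt_one_of_one_lt_of_neg (by norm_num) (by linarith))
  exact Summable.of_norm_bounded hg (fun m => by
    rw [Real.norm_eq_abs]; exact tl_abs_le H θ hθ m t)

lemma tl_shift (H : ℝ) (θ : ℕ → ℕ → ℝ) (m : ℕ) {t : ℝ} (h0 : 0 ≤ t) (h1 : t ≤ 1/2) :
    tlTerm H θ (m+1) t = (2:ℝ)^(-H) * tlTerm H (fun m k => θ (m+1) k) m (2*t) := by
  unfold tlTerm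
  have hfs : ∀ k : ℕ, fs (m+1) (k:ℤ) t = (2:ℝ)^(-(1:ℝ)/2) * fs m (k:ℤ) (2*t) := by
    intro k
    unfold fs
    rw [← mul_assoc, ← Real.rpow_add (by norm_num : (0:ℝ) < 2)]
    congr 2
    · push_cast; ring
    · rw [pow_succ]; ring_nf
  have hsub : ∑ k ∈ Finset.range (2^(m+1)), θ (m+1) k * fs m (k:ℤ) (2*t)
      = ∑ k ∈ Finset.range (2^m), θ (m+1) k * fs m (k:ℤ) (2*t) := by
    symm
    apply Finset.sum_subset (Finset.range_subset_range.mpr (Nat.pow_le_pow_right (by norm_num) (by omega)))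
    intro k hk hk'
    have hge : (2:ℕ)^m ≤ k := by
      by_contra h
      exact hk' (Finset.mem_range.mpr (by omega))
    have : fs m (k:ℤ) (2*t) = 0 := by
      unfold fs
      rw [e00_nonpos, mul_zero]
      have : (2:ℝ)^m * (2*t) ≤ (2:ℝ)^m := by
        nlinarith [pow_pos (by norm_num : (0:ℝ) < 2) m]
      have hk2 : ((2:ℕ)^m : ℝ) ≤ (k:ℝ) := by exact_mod_cast hge
      push_cast at hk2 ⊢
      linarith
    rw [this, mul_zero]
  calc (2:ℝ)^(((m+1:ℕ):ℝ)*(1/2-H)) * ∑ k ∈ Finset.range (2^(m+1)), θ (m+1) k * fs (m+1) (k:ℤ) t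
      = (2:ℝ)^(((m+1:ℕ):ℝ)*(1/2-H)) * ((2:ℝ)^(-(1:ℝ)/2) *
          ∑ k ∈ Finset.range (2^(m+1)), θ (m+1) k * fs m (k:ℤ) (2*t)) := by
        congr 1
        rw [Finset.mul_sum]
        apply Finset.sum_congr rfl
        intro k _
        rw [hfs k]; ring
    _ = (2:ℝ)^(-H) * ((2:ℝ)^((m:ℝ)*(1/2-H)) *
          ∑ k ∈ Finset.range (2^m), θ (m+1) k * fs m (k:ℤ) (2*t)) := by
        rw [hsub, ← mul_assoc, ← mul_assoc, ← Real.rpow_add (by norm_num : (0:ℝ) < 2),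
          ← Real.rpow_add (by norm_num : (0:ℝ) < 2)]
        congr 2
        push_cast; ring

theorem stmt19 (H : ℝ) (hH : H ∈ Set.Ioo (0:ℝ) 1) (θ : ℕ → ℕ → ℝ) (hθ : IsSign θ) :
    ∃ y : ℝ → ℝ, MemX H y ∧
      (∀ t : ℝ, y t = ∑' m : ℕ, tlTerm H (fun m k => θ (m+1) k) m t) ∧
      ∀ t ∈ Set.Icc (0:ℝ) (1/2),
        (∑' m : ℕ, tlTerm H θ m t) = (θ 0 0 / 2) * (2 * t) + (2:ℝ) ^ (-H) * y (2 * t) := by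
  obtain ⟨hH0, hH1⟩ := hH
  refine ⟨fun s => ∑' m, tlTerm H (fun m k => θ (m+1) k) m s,
    ⟨fun m k => θ (m+1) k, fun m k => hθ (m+1) k, fun t => rfl⟩, fun t => rfl, ?_⟩
  rintro t ⟨ht0, ht1⟩
  have hsum := tl_summable H hH0 θ hθ t
  rw [Summable.tsum_eq_zero_add hsum]
  have h0 : tlTerm H θ 0 t = θ 0 0 / 2 * (2*t) := by
    unfold tlTerm fs
    norm_num
    rw [e00_eq_self ht0 ht1]
    ring
  rw [h0, tsum_congr (fun m => tl_shift H θ m ht0 ht1), tsum_mul_left]
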